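/- Let K be a field with char(K) ≠ 2 and consider UJ2 with the classical grading: E0 = span{e11+e22, e11−e22}, E1 = span{e12}. Then for all Y1, Y2, Y3 ∈ E0 and all Z ∈ E1 one has Y1∘(Y2∘(Y3∘Z)) = (1/2)·( Y1∘(Z∘(Y2∘Y3)) + Y2∘(Z∘(Y1∘Y3)) + Y3∘(Z∘(Y1∘Y2)) − Z∘(Y1∘(Y2∘Y3)) ). -/

import Mathlib

open Matrix

noncomputable section

/-- The 2×2 matrices over `K`. -/
abbrev Mat (K : Type*) [Field K] : Type _ := Matrix (Fin 2) (Fin 2) K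

/-- The Jordan product `u∘v = (1/2)(u·v + v·u)`. -/
def jp {K : Type*} [Field K] (u v : Mat K) : Mat K := (1/2 : K) • (u * v + v * u)

/-- The Jordan associator `(u,v,w) = (u∘v)∘w − u∘(v∘w)`. -/
def assoc {K : Type*} [Field K] (u v w : Mat K) : Mat K := jp (jp u v) w - jp u (jp v w)

def oneM (K : Type*) [Field K] : Mat K := !![1, 0; 0, 1]
def aM (K : Type*) [Field K] : Mat K := !![1, 0; 0, -1]
def bM (K : Type*) [Field K] : Mat K := !![0, 1; 0, 0]

/-- Even component of the classical grading: `span{e11+e22, e11−e22}`. -/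
def E0 (K : Type*) [Field K] : Submodule K (Mat K) :=
  Submodule.span K {oneM K, aM K}

/-- Odd component of the classical grading: `span{e12}`. -/
def E1 (K : Type*) [Field K] : Submodule K (Mat K) :=
  Submodule.span K {bM K}

set_option maxHeartbeats 1000000

/-- in `UJ₂` with the classical grading, for even `Y1, Y2, Y3` and odd `Z`:
`Y1∘(Y2∘(Y3∘Z)) = (1/2)·(Y1∘(Z∘(Y2∘Y3)) + Y2∘(Z∘(Y1∘Y3)) + Y3∘(Z∘(Y1∘Y2)) − Z∘(Y1∘(Y2∘Y3)))`. -/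
theorem stmt_14 (K : Type*) [Field K] (hK : ringChar K ≠ 2)
    (Y1 Y2 Y3 : Mat K) (hY1 : Y1 ∈ E0 K) (hY2 : Y2 ∈ E0 K) (hY3 : Y3 ∈ E0 K)
    (Z : Mat K) (hZ : Z ∈ E1 K) :
    jp Y1 (jp Y2 (jp Y3 Z)) =
      (1/2 : K) • (jp Y1 (jp Z (jp Y2 Y3)) + jp Y2 (jp Z (jp Y1 Y3))
        + jp Y3 (jp Z (jp Y1 Y2)) - jp Z (jp Y1 (jp Y2 Y3))) := by
  have h2 : (2 : K) ≠ 0 := by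
    simpa using Ring.two_ne_zero (by simpa [ringChar.spec] using hK)
  rw [E0, Submodule.mem_span_pair] at hY1 hY2 hY3
  rw [E1, Submodule.mem_span_singleton] at hZ
  obtain ⟨a1, b1, rfl⟩ := hY1
  obtain ⟨a2, b2, rfl⟩ := hY2
  obtain ⟨a3, b3, rfl⟩ := hY3
  obtain ⟨c, rfl⟩ := hZ
  ext i j
  fin_cases i <;> fin_cases j <;>
    simp only [jp, oneM, aM, bM, Matrix.smul_apply, Matrix.add_apply, Matrix.sub_apply,
      Matrix.mul_apply, Fin.sum_univ_two, Matrix.cons_val', Matrix.cons_val_zero,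
      Matrix.cons_val_one, Matrix.head_cons, Matrix.head_fin_const, Matrix.empty_val',
      Matrix.cons_val_fin_one, smul_eq_mul, Matrix.of_apply, Fin.zero_eta, Fin.mk_one] <;>
    field_simp <;> ring
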